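/- Let s_1, ..., s_r be complex numbers with arguments in [0, φ], φ ∈ [0, π/2], satisfying |Σ_{i=1}^r s_i| ≤ C' and |s_i| > δ·C_min for every i, where C' < C_min/δ and δ > 0. Then r ≤ ⌊(1/δ²)·sec(φ/2)⌋. -/

import Mathlib

theorem large_demand_counting (r : ℕ) (s : Fin r → ℂ) (φ δ C' Cmin : ℝ)
    (hφ0 : 0 ≤ φ) (hφ : φ ≤ Real.pi / 2) (hδ : 0 < δ) (hCmin : 0 < Cmin)
    (harg : ∀ i, 0 ≤ (s i).arg ∧ (s i).arg ≤ φ)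
    (hsum : ‖∑ i, s i‖ ≤ C')
    (hlarge : ∀ i, δ * Cmin < ‖s i‖)
    (hC' : C' < Cmin / δ) :
    (r : ℤ) ≤ ⌊(1 / δ ^ 2) * (1 / Real.cos (φ / 2))⌋ := by
  have hπ := Real.pi_pos
  have hcos : 0 < Real.cos (φ / 2) :=
    Real.cos_pos_of_mem_Ioo ⟨by linarith, by linarith⟩
  set e : ℂ := Complex.exp ((-(φ / 2) : ℝ) * Complex.I) with he
  have key : ∀ i, ‖s i‖ * Real.cos (φ / 2) ≤ (e * s i).re := by
    intro i
    obtain ⟨h1, h2⟩ := harg i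
    have heq : e * s i =
        (‖s i‖ : ℂ) * Complex.exp ((((s i).arg - φ / 2) : ℝ) * Complex.I) := by
      conv_lhs => rw [← Complex.norm_mul_exp_arg_mul_I (s i)]
      rw [he, mul_comm e, mul_assoc, ← Complex.exp_add]
      congr 2
      push_cast
      ring
    have hre : (e * s i).re = ‖s i‖ * Real.cos ((s i).arg - φ / 2) := by
      rw [heq, Complex.re_ofReal_mul, Complex.exp_ofReal_mul_I_re]
    rw [hre]
    apply mul_le_mul_of_nonneg_left _ (norm_nonneg _)
    rw [← Real.cos_abs ((s i).arg - φ / 2)]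
    apply Real.cos_le_cos_of_nonneg_of_le_pi (abs_nonneg _) (by linarith)
    rw [abs_le]
    constructor <;> linarith
  have hsum2 : (∑ i, ‖s i‖) * Real.cos (φ / 2) ≤ C' := by
    calc (∑ i, ‖s i‖) * Real.cos (φ / 2)
        = ∑ i, ‖s i‖ * Real.cos (φ / 2) := Finset.sum_mul _ _ _
      _ ≤ ∑ i, (e * s i).re := Finset.sum_le_sum fun i _ => key i
      _ = (e * ∑ i, s i).re := by rw [Finset.mul_sum, Complex.re_sum]
      _ ≤ ‖e * ∑ i, s i‖ := Complex.re_le_norm _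
      _ = ‖∑ i, s i‖ := by
          rw [norm_mul, he, Complex.norm_exp_ofReal_mul_I, one_mul]
      _ ≤ C' := hsum
  have h1 : (r : ℝ) * (δ * Cmin) ≤ ∑ i, ‖s i‖ := by
    have := Finset.sum_le_sum (fun i (_ : i ∈ Finset.univ) => (hlarge i).le)
    simpa [Finset.sum_const, Finset.card_univ, nsmul_eq_mul] using this
  have h4 : (r : ℝ) * (δ * Cmin * Real.cos (φ / 2)) < Cmin / δ := by
    calc (r : ℝ) * (δ * Cmin * Real.cos (φ / 2))
        = ((r : ℝ) * (δ * Cmin)) * Real.cos (φ / 2) := by ring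
      _ ≤ (∑ i, ‖s i‖) * Real.cos (φ / 2) :=
          mul_le_mul_of_nonneg_right h1 hcos.le
      _ ≤ C' := hsum2
      _ < Cmin / δ := hC'
  rw [lt_div_iff₀ hδ] at h4
  have h5 : (r : ℝ) * (δ ^ 2 * Real.cos (φ / 2)) < 1 := by
    have : (r : ℝ) * (δ ^ 2 * Real.cos (φ / 2)) * Cmin < Cmin := by nlinarith
    nlinarith
  rw [Int.le_floor]
  push_cast
  calc (r : ℝ) ≤ 1 / (δ ^ 2 * Real.cos (φ / 2)) := by
        rw [le_div_iff₀ (by positivity)]; linarith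
    _ = 1 / δ ^ 2 * (1 / Real.cos (φ / 2)) := (one_div_mul_one_div _ _).symm
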